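/- Let φ: F → F' be an independent map of forests (i.e. there exists a tuple e̲ with φ(r̲_F)·e̲ ≤ r̲_{F'}, where r̲ denotes root tuples). Then two edges e, ē ∈ F are ≤_d-comparable if and only if φ(e), φ(ē) are ≤_d-comparable. Moreover, if φ(e) = φ(ē) then any relation ē·f̲ ≤ e forces f̲ = ε, and hence either e ≤ ē or ē ≤ e. -/
import Mathlib


universe u

namespace BroadPaper

/-- A broad relation on `X`: a relation between finite unordered tuples
(multisets) over `X` and elements of `X`. -/
abbrev Rel (X : Type u) : Type u := Multiset X → X → Prop

variable {X : Type u} {Y : Type u} {A : Type u} {B : Type u} {Z : Type u}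

/-- Broad transitivity: if `f₁ ⋯ fₙ ≤ e` and `g̲ᵢ ≤ fᵢ` then `g̲₁ ⋯ g̲ₙ ≤ e`,
encoded via a multiset of pairs `(g̲ᵢ, fᵢ)`. -/
def BTrans (r : Rel X) : Prop :=
  ∀ (p : Multiset (Multiset X × X)) (e : X),
    r (p.map Prod.snd) e → (∀ q ∈ p, r q.1 q.2) → r ((p.map Prod.fst).sum) e

/-- A pre-broad poset: reflexivity plus broad transitivity. -/
def IsPreBroad (r : Rel X) : Prop := (∀ e : X, r {e} e) ∧ BTrans r

/-- A (commutative) broad poset: a pre-broad poset satisfying antisymmetry. -/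
def IsBroad (r : Rel X) : Prop :=
  IsPreBroad r ∧ ∀ e f : X, r {e} f → r {f} e → e = f

/-- Simplicity: letters in any broad relation are pairwise distinct. -/
def Simple (r : Rel X) : Prop := ∀ fs e, r fs e → fs.Nodup

/-- The descendant relation `f ≤_d e`. -/
def descends (r : Rel X) (f e : X) : Prop := ∃ fs, r fs e ∧ f ∈ fs

def Comparable (r : Rel X) (f g : X) : Prop := descends r f g ∨ descends r g f

def Incomp (r : Rel X) (f g : X) : Prop := ¬ descends r f g ∧ ¬ descends r g f

/-- Blockwise extension of a broad relation to a relation between tuples: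
`fs ≤ es` iff `fs = f̲₁ ⋯ f̲ₖ`, `es = e₁ ⋯ eₖ` with `f̲ᵢ ≤ eᵢ`. -/
def tupleLE (r : Rel X) (fs es : Multiset X) : Prop :=
  ∃ p : Multiset (Multiset X × X),
    p.map Prod.snd = es ∧ (p.map Prod.fst).sum = fs ∧ ∀ q ∈ p, r q.1 q.2

/-- A leaf: no tuple strictly below `e`. -/
def IsLeaf (r : Rel X) (e : X) : Prop := ¬ ∃ fs, r fs e ∧ fs ≠ ({e} : Multiset X)

/-- `fs` is the maximum tuple strictly below `e` (written `e^↑`).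
If `fs ≠ 0`, `e` is a node; if `fs = 0`, `e` is a stump. -/
def upTuple (r : Rel X) (e : X) (fs : Multiset X) : Prop :=
  (r fs e ∧ fs ≠ ({e} : Multiset X)) ∧
    ∀ gs, r gs e → gs ≠ ({e} : Multiset X) → tupleLE r gs fs

def IsStump (r : Rel X) (e : X) : Prop := upTuple r e 0

/-- A dendroidally ordered set (tree): a finite simple broad poset in which
every element is a leaf, node or stump, with a `≤_d`-maximum (root). -/
def IsTree (r : Rel X) : Prop :=
  IsBroad r ∧ Finite X ∧ Simple r ∧
    (∀ e : X, IsLeaf r e ∨ ∃ fs, upTuple r e fs) ∧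
    ∃ rt : X, ∀ e, descends r e rt

def IsMaxEl (r : Rel X) (e : X) : Prop := ∀ s, descends r e s → s = e

/-- A forestially ordered set (forest): each element has a unique
`≤_d`-maximal element above it. -/
def IsForest (r : Rel X) : Prop :=
  IsBroad r ∧ Finite X ∧ Simple r ∧
    (∀ e : X, IsLeaf r e ∨ ∃ fs, upTuple r e fs) ∧
    ∀ e : X, ∃! rt : X, IsMaxEl r rt ∧ descends r e rt

/-- A map of broad posets: preserves broad relations (letterwise on tuples). -/
def BroadHom (r : Rel X) (r' : Rel Y) (φ : X → Y) : Prop :=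
  ∀ fs e, r fs e → r' (fs.map φ) (φ e)

/-- `rs` is the root tuple: the tuple of `≤_d`-maximal elements (no repeats). -/
def IsRootTuple (r : Rel X) (rs : Multiset X) : Prop :=
  rs.Nodup ∧ ∀ x, x ∈ rs ↔ IsMaxEl r x

/-- Independent map of forests: `φ(r̲_F)·e̲ ≤ r̲_{F'}` for some tuple `e̲`. -/
def Independent (r : Rel X) (r' : Rel Y) (φ : X → Y) : Prop :=
  ∃ (rs : Multiset X) (rs' : Multiset Y) (es : Multiset Y),
    IsRootTuple r rs ∧ IsRootTuple r' rs' ∧ tupleLE r' (rs.map φ + es) rs'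

/-- The (pre-)broad relation generated by a set of generating relations:
closure under reflexivity and broad transitivity. -/
inductive GenRel (gen : Rel X) : Rel X
  | of : ∀ fs e, gen fs e → GenRel gen fs e
  | refl : ∀ e, GenRel gen {e} e
  | btrans : ∀ (p : Multiset (Multiset X × X)) (e : X),
      GenRel gen (p.map Prod.snd) e → (∀ q ∈ p, GenRel gen q.1 q.2) →
      GenRel gen ((p.map Prod.fst).sum) e

/-- Generators of the tensor product `S ⊗ T`: relations `s̲ × t ≤ (s,t)` and
`s × t̲ ≤ (s,t)`. -/
def tensorGen (rS : Rel A) (rT : Rel B) : Rel (A × B) := fun xs x =>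
  (∃ as, rS as x.1 ∧ xs = as.map fun a => (a, x.2)) ∨
  (∃ bs, rT bs x.2 ∧ xs = bs.map fun b => (x.1, b))

/-- The tensor product broad relation on `A × B`. -/
def tensorRel (rS : Rel A) (rT : Rel B) : Rel (A × B) := GenRel (tensorGen rS rT)

/-- Product of tuples: all pairs from `as` and `bs`. -/
def mprod (as : Multiset A) (bs : Multiset B) : Multiset (A × B) :=
  as.bind fun a => bs.map fun b => (a, b)

end BroadPaper


namespace BroadPaper

section AuxLemmas

variable {X : Type u} {r : Rel X}

lemma mem_msum {S : Multiset (Multiset X)} {a : X} (h : a ∈ S.sum) : ∃ s ∈ S, a ∈ s := by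
  induction S using Multiset.induction_on with
  | empty => simp at h
  | cons b S ih =>
    rw [Multiset.sum_cons] at h
    rcases Multiset.mem_add.mp h with h | h
    · exact ⟨b, Multiset.mem_cons_self _ _, h⟩
    · obtain ⟨s, hs, ha⟩ := ih h
      exact ⟨s, Multiset.mem_cons_of_mem hs, ha⟩

lemma subst1 (hB : BTrans r) (hrefl : ∀ e, r {e} e) [DecidableEq X] {fs : Multiset X} {a f : X}
    (h : r fs a) (hf : f ∈ fs) {gs : Multiset X} (hg : r gs f) :
    r (gs + fs.erase f) a := by
  obtain ⟨fs', rfl⟩ := Multiset.exists_cons_of_mem hf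
  rw [Multiset.erase_cons_head]
  have := hB ((gs, f) ::ₘ fs'.map (fun x => ({x}, x))) a ?_ ?_
  · simpa [Multiset.map_map, Function.comp] using this
  · simpa [Multiset.map_map, Function.comp] using h
  · intro q hq
    rcases Multiset.mem_cons.mp hq with rfl | hq
    · exact hg
    · obtain ⟨x, _, rfl⟩ := Multiset.mem_map.mp hq
      exact hrefl x

lemma subst2 (hB : BTrans r) (hrefl : ∀ e, r {e} e) [DecidableEq X]
    {T : Multiset X} {a x y : X} (h : r T a) (hx : x ∈ T) (hy : y ∈ T.erase x)
    {gx gy : Multiset X} (hgx : r gx x) (hgy : r gy y) :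
    r (gx + gy + (T.erase x).erase y) a := by
  obtain ⟨T', rfl⟩ := Multiset.exists_cons_of_mem hx
  rw [Multiset.erase_cons_head] at hy ⊢
  obtain ⟨T'', rfl⟩ := Multiset.exists_cons_of_mem hy
  rw [Multiset.erase_cons_head]
  have := hB ((gx, x) ::ₘ (gy, y) ::ₘ T''.map (fun z => ({z}, z))) a ?_ ?_
  · simpa [Multiset.map_map, Function.comp, add_assoc] using this
  · simpa [Multiset.map_map, Function.comp] using h
  · intro q hq
    rcases Multiset.mem_cons.mp hq with rfl | hq
    · exact hgx
    rcases Multiset.mem_cons.mp hq with rfl | hq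
    · exact hgy
    obtain ⟨z, _, rfl⟩ := Multiset.mem_map.mp hq
    exact hrefl z

lemma descends_refl (hrefl : ∀ e, r {e} e) (e : X) : descends r e e :=
  ⟨{e}, hrefl e, Multiset.mem_singleton_self e⟩

lemma descends_trans (hB : BTrans r) (hrefl : ∀ e, r {e} e) {e f g : X}
    (h1 : descends r e f) (h2 : descends r f g) : descends r e g := by
  haveI := Classical.decEq X
  obtain ⟨gs, hgs, he⟩ := h1
  obtain ⟨fs, hfs, hf⟩ := h2
  exact ⟨gs + fs.erase f, subst1 hB hrefl hfs hf hgs, Multiset.mem_add.mpr (Or.inl he)⟩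

/-- In a simple broad poset, any relation with `a` among the letters below `a`
must be the trivial one. -/
lemma self_mem_eq (hB : BTrans r) (hrefl : ∀ e, r {e} e) (hS : Simple r)
    {fs : Multiset X} {a : X} (h : r fs a) (ha : a ∈ fs) : fs = ({a} : Multiset X) := by
  haveI := Classical.decEq X
  obtain ⟨t, rfl⟩ := Multiset.exists_cons_of_mem ha
  rcases Multiset.empty_or_exists_mem t with rfl | ⟨x, hx⟩
  · rfl
  · exfalso
    have h2 : r ((a ::ₘ t) + t) a := by
      have := subst1 hB hrefl h ha h
      rwa [Multiset.erase_cons_head] at this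
    have hnd := hS _ _ h2
    rw [Multiset.nodup_iff_count_le_one] at hnd
    have := hnd x
    rw [Multiset.count_add] at this
    have h1 : 1 ≤ Multiset.count x t := Multiset.one_le_count_iff_mem.mpr hx
    have h1' : 1 ≤ Multiset.count x (a ::ₘ t) :=
      Multiset.one_le_count_iff_mem.mpr (Multiset.mem_cons_of_mem hx)
    omega

lemma descends_antisymm (hBr : IsBroad r) (hS : Simple r) {e a : X}
    (h1 : descends r e a) (h2 : descends r a e) : e = a := by
  haveI := Classical.decEq X
  obtain ⟨⟨hrefl, hB⟩, hanti⟩ := hBr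
  obtain ⟨fs, hfs, he⟩ := h1
  obtain ⟨gs, hgs, ha⟩ := h2
  have h3 : r (gs + fs.erase e) a := subst1 hB hrefl hfs he hgs
  have h4 : gs + fs.erase e = ({a} : Multiset X) :=
    self_mem_eq hB hrefl hS h3 (Multiset.mem_add.mpr (Or.inl ha))
  have hcard : Multiset.card gs + Multiset.card (fs.erase e) = 1 := by
    have := congrArg Multiset.card h4
    simpa using this
  have hg0 : Multiset.card gs ≠ 0 := by
    intro h0
    rw [Multiset.card_eq_zero] at h0
    subst h0; simp at ha
  have hge : Multiset.card (fs.erase e) = 0 := by omega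
  rw [Multiset.card_eq_zero] at hge
  have hgs1 : gs = ({a} : Multiset X) := by
    rw [hge, add_zero] at h4; exact h4
  have hfs1 : fs = ({e} : Multiset X) := by
    obtain ⟨fs', rfl⟩ := Multiset.exists_cons_of_mem he
    rw [Multiset.erase_cons_head] at hge
    rw [hge]; rfl
  exact hanti e a (hfs1 ▸ hfs) (hgs1 ▸ hgs)

/-- Key contradiction: a tuple containing `b` and (a separate copy of) `a`,
with `a` descending from `b`, violates simplicity. -/
lemma contra_lemma (hB : BTrans r) (hrefl : ∀ e, r {e} e) (hS : Simple r)
    [DecidableEq X] {T : Multiset X} {t a b : X}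
    (hT : r T t) (hb : b ∈ T) (ha : a ∈ T.erase b) (hd : descends r a b) : False := by
  obtain ⟨gs, hgs, hags⟩ := hd
  have h2 : r (gs + T.erase b) t := subst1 hB hrefl hT hb hgs
  have hnd := hS _ _ h2
  rw [Multiset.nodup_iff_count_le_one] at hnd
  have := hnd a
  rw [Multiset.count_add] at this
  have h1 : 1 ≤ Multiset.count a gs := Multiset.one_le_count_iff_mem.mpr hags
  have h1' : 1 ≤ Multiset.count a (T.erase b) := Multiset.one_le_count_iff_mem.mpr ha
  omega

lemma mem_add_erase [DecidableEq X] {A B : Multiset X} {a b : X}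
    (ha : a ∈ A) (hb : b ∈ B) : b ∈ (A + B).erase a := by
  obtain ⟨A', rfl⟩ := Multiset.exists_cons_of_mem ha
  rw [Multiset.cons_add, Multiset.erase_cons_head]
  exact Multiset.mem_add.mpr (Or.inr hb)

lemma map_mem_erase [DecidableEq X] {Y : Type u} [DecidableEq Y] (φ : X → Y)
    {s : Multiset X} {x y : X} (hx : x ∈ s) (hy : y ∈ s.erase x) :
    φ y ∈ (s.map φ).erase (φ x) := by
  obtain ⟨s', rfl⟩ := Multiset.exists_cons_of_mem hx
  rw [Multiset.erase_cons_head] at hy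
  rw [Multiset.map_cons, Multiset.erase_cons_head]
  exact Multiset.mem_map_of_mem φ hy


lemma mem_add_erase3 [DecidableEq X] {A B C : Multiset X} {a b : X}
    (ha : a ∈ A) (hb : b ∈ B) : b ∈ (A + B + C).erase a := by
  rw [Multiset.erase_add_left_pos C (Multiset.mem_add.mpr (Or.inl ha))]
  exact Multiset.mem_add.mpr (Or.inl (mem_add_erase ha hb))

lemma descends_wf (hBr : IsBroad r) (hFin : Finite X) (hS : Simple r) :
    WellFounded (fun x y => descends r x y ∧ x ≠ y) := by
  haveI : IsTrans X (fun x y => descends r x y ∧ x ≠ y) := by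
    constructor
    intro a b c ⟨h1, h2⟩ ⟨h3, h4⟩
    refine ⟨descends_trans hBr.1.2 hBr.1.1 h1 h3, ?_⟩
    rintro rfl
    exact h4 (descends_antisymm hBr hS h3 h1)
  haveI : IsIrrefl X (fun x y => descends r x y ∧ x ≠ y) := by
    constructor; intro a ⟨_, h⟩; exact h rfl
  exact Finite.wellFounded_of_trans_of_irrefl _

lemma tupleLE_mem {fs us : Multiset X} {e : X} (h : tupleLE r fs us) (he : e ∈ fs) :
    ∃ u ∈ us, ∃ b, r b u ∧ e ∈ b := by
  obtain ⟨p, hsnd, hsum, hrel⟩ := h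
  rw [← hsum] at he
  obtain ⟨s, hs, hes⟩ := mem_msum he
  obtain ⟨q, hq, rfl⟩ := Multiset.mem_map.mp hs
  exact ⟨q.2, hsnd ▸ Multiset.mem_map_of_mem _ hq, q.1, hrel q hq, hes⟩

/-- Two descendants of `a` are either comparable or occur together in a
common tuple below `a`. -/
lemma common_tuple (hF : IsForest r) (a : X) :
    ∀ e ebar : X, descends r e a → descends r ebar a →
      Comparable r e ebar ∨ ∃ fs, r (ebar ::ₘ fs) a ∧ e ∈ fs := by
  obtain ⟨hBr, hFin, hS, hdich, hroots⟩ := hF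
  obtain ⟨⟨hrefl, hB⟩, hanti⟩ := hBr
  have wf := descends_wf ⟨⟨hrefl, hB⟩, hanti⟩ hFin hS
  refine WellFounded.induction wf (C := fun a => ∀ e ebar : X,
    descends r e a → descends r ebar a → Comparable r e ebar ∨
      ∃ fs, r (ebar ::ₘ fs) a ∧ e ∈ fs) a ?_
  intro a ih e ebar hde hdebar
  rcases hdich a with hleaf | ⟨us, ⟨hus, husne⟩, hmax⟩
  · -- leaf case
    obtain ⟨fs, hfs, he⟩ := hde
    obtain ⟨gs, hgs, hebar⟩ := hdebar
    have hfs1 : fs = ({a} : Multiset X) := by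
      by_contra hcon; exact hleaf ⟨fs, hfs, hcon⟩
    have hgs1 : gs = ({a} : Multiset X) := by
      by_contra hcon; exact hleaf ⟨gs, hgs, hcon⟩
    rw [hfs1, Multiset.mem_singleton] at he
    rw [hgs1, Multiset.mem_singleton] at hebar
    subst he; subst hebar
    exact Or.inl (Or.inl (descends_refl hrefl _))
  · -- node/stump case
    haveI := Classical.decEq X
    obtain ⟨fs, hfs, he⟩ := hde
    obtain ⟨gs, hgs, hebar⟩ := hdebar
    by_cases hfa : fs = ({a} : Multiset X)
    · rw [hfa, Multiset.mem_singleton] at he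
      subst he
      exact Or.inl (Or.inr ⟨gs, hgs, hebar⟩)
    by_cases hga : gs = ({a} : Multiset X)
    · rw [hga, Multiset.mem_singleton] at hebar
      subst hebar
      exact Or.inl (Or.inl ⟨fs, hfs, he⟩)
    obtain ⟨u, hu, be, hbe, hebe⟩ := tupleLE_mem (hmax fs hfs hfa) he
    obtain ⟨ub, hub, bebar, hbebar, hebarbe⟩ := tupleLE_mem (hmax gs hgs hga) hebar
    have hua : descends r u a := ⟨us, hus, hu⟩
    have hune : u ≠ a := by
      rintro rfl
      exact husne (self_mem_eq hB hrefl hS hus hu)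
    by_cases huu : u = ub
    · subst huu
      rcases ih u ⟨hua, hune⟩ e ebar ⟨be, hbe, hebe⟩ ⟨bebar, hbebar, hebarbe⟩ with hc | ⟨g, hg, heg⟩
      · exact Or.inl hc
      · right
        refine ⟨g + us.erase u, ?_, Multiset.mem_add.mpr (Or.inl heg)⟩
        have := subst1 hB hrefl hus hu hg
        rwa [Multiset.cons_add] at this
    · -- distinct letters of us
      obtain ⟨b', rfl⟩ := Multiset.exists_cons_of_mem hebarbe
      right
      refine ⟨b' + be + ((us.erase ub).erase u), ?_, ?_⟩
      · have hu' : u ∈ us.erase ub := (Multiset.mem_erase_of_ne huu).mpr hu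
        have := subst2 hB hrefl hus hub hu' hbebar hbe
        rwa [Multiset.cons_add, Multiset.cons_add] at this
      · exact Multiset.mem_add.mpr (Or.inl (Multiset.mem_add.mpr (Or.inr hebe)))

lemma descends_map {Y : Type u} {r' : Rel Y} {φ : X → Y} (hhom : BroadHom r r' φ)
    {e a : X} (h : descends r e a) : descends r' (φ e) (φ a) := by
  obtain ⟨fs, hfs, he⟩ := h
  exact ⟨fs.map φ, hhom _ _ hfs, Multiset.mem_map_of_mem φ he⟩

/-- Blocks below pairwise distinct maximal elements have `Nodup` union. -/
lemma blocks_nodup (hBr : IsBroad r) (hS : Simple r)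
    (huniq : ∀ e : X, ∃! rt : X, IsMaxEl r rt ∧ descends r e rt) :
    ∀ p : Multiset (Multiset X × X), (p.map Prod.snd).Nodup →
      (∀ q ∈ p, r q.1 q.2) → (∀ q ∈ p, IsMaxEl r q.2) →
      ((p.map Prod.fst).sum).Nodup := by
  intro p
  induction p using Multiset.induction_on with
  | empty => intro _ _ _; simp
  | cons q p ih =>
    intro hnd hrel hmax
    rw [Multiset.map_cons, Multiset.nodup_cons] at hnd
    rw [Multiset.map_cons, Multiset.sum_cons]
    rw [Multiset.nodup_add]
    refine ⟨hS _ _ (hrel q (Multiset.mem_cons_self q p)), 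
      ih hnd.2 (fun q' hq' => hrel q' (Multiset.mem_cons_of_mem hq'))
        (fun q' hq' => hmax q' (Multiset.mem_cons_of_mem hq')), ?_⟩
    rw [Multiset.disjoint_left]
    intro x hx1 hx2
    obtain ⟨s, hs, hxs⟩ := mem_msum hx2
    obtain ⟨q', hq', rfl⟩ := Multiset.mem_map.mp hs
    have hd1 : descends r x q.2 := ⟨q.1, hrel q (Multiset.mem_cons_self q p), hx1⟩
    have hd2 : descends r x q'.2 := ⟨q'.1, hrel q' (Multiset.mem_cons_of_mem hq'), hxs⟩
    obtain ⟨t, _, htu⟩ := huniq x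
    have h1 : q.2 = t := htu q.2 ⟨hmax q (Multiset.mem_cons_self q p), hd1⟩
    have h2 : q'.2 = t := htu q'.2 ⟨hmax q' (Multiset.mem_cons_of_mem hq'), hd2⟩
    exact hnd.1 ((h1.trans h2.symm) ▸ Multiset.mem_map_of_mem Prod.snd hq')

/-- Main lemma: an independent map of forests cannot make incomparable edges
comparable. -/
lemma main_incomp {Y : Type u} {r' : Rel Y} {φ : X → Y}
    (hF : IsForest r) (hF' : IsForest r')
    (hhom : BroadHom r r' φ) (hind : Independent r r' φ) {e ebar : X}
    (hnc : ¬ Comparable r e ebar) (hd : descends r' (φ e) (φ ebar)) : False := by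
  haveI := Classical.decEq X
  haveI := Classical.decEq Y
  obtain ⟨hBr, hFin, hS, hdich, huniq⟩ := hF
  obtain ⟨hBr', hFin', hS', hdich', huniq'⟩ := hF'
  obtain ⟨⟨hrefl', hB'⟩, hanti'⟩ := id hBr'
  obtain ⟨rs, rs', es, ⟨hrsnd, hrs⟩, ⟨hrs'nd, hrs'⟩, p, hpsnd, hpsum, hprel⟩ := hind
  obtain ⟨rt1, ⟨hmax1, hd1⟩, _⟩ := huniq e
  obtain ⟨rt2, ⟨hmax2, hd2⟩, _⟩ := huniq ebar
  by_cases hrt : rt1 = rt2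
  · -- same root: common tuple
    subst hrt
    rcases common_tuple ⟨hBr, hFin, hS, hdich, huniq⟩ rt1 e ebar hd1 hd2 with hc | ⟨fs, hfs, he⟩
    · exact hnc hc
    · have hT : r' (φ ebar ::ₘ fs.map φ) (φ rt1) := by
        have := hhom _ _ hfs
        rwa [Multiset.map_cons] at this
      refine contra_lemma hB' hrefl' hS' hT (Multiset.mem_cons_self _ _) ?_ hd
      rw [Multiset.erase_cons_head]
      exact Multiset.mem_map_of_mem φ he
  · -- different roots: use independence
    have hrt1rs : rt1 ∈ rs := (hrs rt1).mpr hmax1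
    have hrt2rs : rt2 ∈ rs := (hrs rt2).mpr hmax2
    have hmem1 : φ rt1 ∈ (p.map Prod.fst).sum := by
      rw [hpsum]; exact Multiset.mem_add.mpr (Or.inl (Multiset.mem_map_of_mem φ hrt1rs))
    have hmem2 : φ rt2 ∈ (p.map Prod.fst).sum := by
      rw [hpsum]; exact Multiset.mem_add.mpr (Or.inl (Multiset.mem_map_of_mem φ hrt2rs))
    obtain ⟨s1, hs1, h1s⟩ := mem_msum hmem1
    obtain ⟨q1, hq1, rfl⟩ := Multiset.mem_map.mp hs1
    obtain ⟨s2, hs2, h2s⟩ := mem_msum hmem2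
    obtain ⟨q2, hq2, rfl⟩ := Multiset.mem_map.mp hs2
    have hmaxq : ∀ q ∈ p, IsMaxEl r' q.2 := by
      intro q hq
      exact (hrs' q.2).mp (hpsnd ▸ Multiset.mem_map_of_mem Prod.snd hq)
    have hde1 : descends r' (φ e) q1.2 :=
      descends_trans hB' hrefl' (descends_trans hB' hrefl' (descends_map hhom hd1)
        ⟨q1.1, hprel q1 hq1, h1s⟩) (descends_refl hrefl' _)
    have hde2 : descends r' (φ e) q2.2 :=
      descends_trans hB' hrefl' hd
        (descends_trans hB' hrefl' (descends_map hhom hd2) ⟨q2.1, hprel q2 hq2, h2s⟩)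
    obtain ⟨t, _, htu⟩ := huniq' (φ e)
    have hq12 : q1 = q2 := by
      have h1 : q1.2 = t := htu q1.2 ⟨hmaxq q1 hq1, hde1⟩
      have h2 : q2.2 = t := htu q2.2 ⟨hmaxq q2 hq2, hde2⟩
      have hndp : (p.map Prod.snd).Nodup := hpsnd ▸ hrs'nd
      exact Multiset.inj_on_of_nodup_map hndp q1 hq1 q2 hq2 (h1.trans h2.symm)
    -- φ rt1 ≠ φ rt2
    have hsumnd : ((p.map Prod.fst).sum).Nodup :=
      blocks_nodup hBr' hS' huniq' p (hpsnd ▸ hrs'nd) hprel hmaxq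
    have hrsmapnd : (rs.map φ).Nodup := by
      rw [hpsum, Multiset.nodup_add] at hsumnd
      exact hsumnd.1
    have hne : φ rt1 ≠ φ rt2 := by
      intro hcon
      exact hrt (Multiset.inj_on_of_nodup_map hrsmapnd rt1 hrt1rs rt2 hrt2rs hcon)
    -- both in the same block q1.1
    rw [← hq12] at h2s
    obtain ⟨f1, hf1, hef1⟩ := hd1
    obtain ⟨f2, hf2, hef2⟩ := hd2
    have h1s' : φ rt1 ∈ (q1.1).erase (φ rt2) := (Multiset.mem_erase_of_ne hne).mpr h1s
    have hT : r' (f2.map φ + f1.map φ + (((q1.1).erase (φ rt2)).erase (φ rt1))) q1.2 :=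
      subst2 hB' hrefl' (hprel q1 hq1) h2s h1s' (hhom _ _ hf2) (hhom _ _ hf1)
    exact contra_lemma hB' hrefl' hS' hT
      (Multiset.mem_add.mpr (Or.inl (Multiset.mem_add.mpr (Or.inl (Multiset.mem_map_of_mem φ hef2)))))
      (mem_add_erase3 (Multiset.mem_map_of_mem φ hef2) (Multiset.mem_map_of_mem φ hef1)) hd

end AuxLemmas

end BroadPaper

namespace BroadPaper

/-- For an independent map of forests `φ : F → F'`, edges
`e, e'` are `≤_d`-comparable iff their images are; moreover if `φ e = φ e'`
then any relation `e'·f̲ ≤ e` forces `f̲ = ε`, and hence `e ≤ e'` or `e' ≤ e`. -/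
theorem stmt9 {X Y : Type u} (r : Rel X) (r' : Rel Y) (φ : X → Y)
    (hF : IsForest r) (hF' : IsForest r')
    (hhom : BroadHom r r' φ) (hind : Independent r r' φ) :
    (∀ e e' : X, Comparable r e e' ↔ Comparable r' (φ e) (φ e')) ∧
    (∀ e e' : X, φ e = φ e' →
      (∀ fs, r (e' ::ₘ fs) e → fs = 0) ∧ (r {e} e' ∨ r {e'} e)) := by
  have hrefl' : ∀ y : Y, r' {y} y := hF'.1.1.1
  have hB' : BTrans r' := hF'.1.1.2
  have hS' : Simple r' := hF'.2.2.1
  -- Part 1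
  have hiff : ∀ e e' : X, Comparable r e e' ↔ Comparable r' (φ e) (φ e') := by
    intro e e'
    constructor
    · rintro (h | h)
      · exact Or.inl (descends_map hhom h)
      · exact Or.inr (descends_map hhom h)
    · intro hc
      by_contra hnc
      rcases hc with h | h
      · exact main_incomp hF hF' hhom hind hnc h
      · have hnc' : ¬ Comparable r e' e := fun hc' => hnc (Or.symm hc')
        exact main_incomp hF hF' hhom hind hnc' h
  -- Part 2 (i)
  have hpart2i : ∀ a b : X, φ a = φ b → ∀ fs, r (b ::ₘ fs) a → fs = 0 := by
    intro a b hab fs hr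
    have h' := hhom _ _ hr
    rw [Multiset.map_cons, ← hab] at h'
    have h2 : φ a ::ₘ fs.map φ = ({φ a} : Multiset Y) :=
      self_mem_eq hB' hrefl' hS' h' (Multiset.mem_cons_self _ _)
    have h3 : fs.map φ = 0 := by
      have : φ a ::ₘ fs.map φ = φ a ::ₘ 0 := h2
      exact (Multiset.cons_inj_right _).mp this
    exact Multiset.map_eq_zero.mp h3
  refine ⟨hiff, ?_⟩
  intro e e' heq
  refine ⟨hpart2i e e' heq, ?_⟩
  have hcomp : Comparable r e e' := by
    rw [hiff]
    exact Or.inl (heq ▸ descends_refl hrefl' (φ e))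
  rcases hcomp with ⟨gs, hgs, hegs⟩ | ⟨gs, hgs, hegs⟩
  · -- descends r e e'
    obtain ⟨gs', rfl⟩ := Multiset.exists_cons_of_mem hegs
    have h0 : gs' = 0 := hpart2i e' e heq.symm gs' hgs
    subst h0
    exact Or.inl hgs
  · -- descends r e' e
    obtain ⟨gs', rfl⟩ := Multiset.exists_cons_of_mem hegs
    have h0 : gs' = 0 := hpart2i e e' heq gs' hgs
    subst h0
    exact Or.inr hgs

end BroadPaper
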